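/- The function p(s) = (C - iD) sin(s√(1+B^2)) / (√(1+B^2) cos(s√(1+B^2)) + iB sin(s√(1+B^2))) solves the complex Riccati equation ṗ = (C+iD) p^2 - 2iB p + (C - iD) with p(0) = 0, where B, C, D ∈ R and C^2 + D^2 = 1. -/

import Mathlib

/-- p(s) = (C - iD) sin(s√(1+B²)) / (√(1+B²) cos(s√(1+B²)) + iB sin(s√(1+B²))) -/
noncomputable def pfun (B C D : ℝ) (s : ℝ) : ℂ :=
  (((C : ℂ) - Complex.I * (D : ℂ)) * (Real.sin (s * Real.sqrt (1 + B^2)) : ℂ))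
  / (((Real.sqrt (1 + B^2) : ℝ) : ℂ) * (Real.cos (s * Real.sqrt (1 + B^2)) : ℂ)
      + Complex.I * (B : ℂ) * (Real.sin (s * Real.sqrt (1 + B^2)) : ℂ))

/-- p solves the complex Riccati equation
ṗ = (C+iD)p² - 2iBp + (C-iD) with p(0) = 0. -/
theorem riccati_solution (B C D : ℝ) (hCD : C^2 + D^2 = 1) :
    pfun B C D 0 = 0 ∧
    ∀ s : ℝ,
      (((Real.sqrt (1 + B^2) : ℝ) : ℂ) * (Real.cos (s * Real.sqrt (1 + B^2)) : ℂ)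
        + Complex.I * (B : ℂ) * (Real.sin (s * Real.sqrt (1 + B^2)) : ℂ)) ≠ 0 →
      HasDerivAt (pfun B C D)
        (((C : ℂ) + Complex.I * (D : ℂ)) * (pfun B C D s)^2
          - 2 * Complex.I * (B : ℂ) * (pfun B C D s) + ((C : ℂ) - Complex.I * (D : ℂ))) s := by
  constructor
  · simp [pfun]
  · intro s hQ
    set ω : ℝ := Real.sqrt (1 + B^2) with hωdef
    have hω2 : (ω : ℂ)^2 = 1 + (B : ℂ)^2 := by
      have h : ω^2 = 1 + B^2 := Real.sq_sqrt (by positivity)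
      rw [← Complex.ofReal_pow, h]
      push_cast
      ring
    have hlin : HasDerivAt (fun t : ℝ => t * ω) ω s := by
      simpa using (hasDerivAt_id s).mul_const ω
    have hsinR : HasDerivAt (fun t : ℝ => Real.sin (t * ω)) (Real.cos (s * ω) * ω) s :=
      hlin.sin
    have hcosR : HasDerivAt (fun t : ℝ => Real.cos (t * ω)) (-Real.sin (s * ω) * ω) s :=
      hlin.cos
    have hsin : HasDerivAt (fun t : ℝ => ((Real.sin (t * ω) : ℝ) : ℂ))
        ((Real.cos (s * ω) * ω : ℝ) : ℂ) s := hsinR.ofReal_comp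
    have hcos : HasDerivAt (fun t : ℝ => ((Real.cos (t * ω) : ℝ) : ℂ))
        ((-Real.sin (s * ω) * ω : ℝ) : ℂ) s := hcosR.ofReal_comp
    have hN : HasDerivAt (fun t : ℝ =>
        ((C : ℂ) - Complex.I * (D : ℂ)) * (Real.sin (t * ω) : ℂ))
        (((C : ℂ) - Complex.I * (D : ℂ)) * ((Real.cos (s * ω) * ω : ℝ) : ℂ)) s :=
      hsin.const_mul _
    have hD : HasDerivAt (fun t : ℝ =>
        ((ω : ℝ) : ℂ) * (Real.cos (t * ω) : ℂ)
          + Complex.I * (B : ℂ) * (Real.sin (t * ω) : ℂ))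
        (((ω : ℝ) : ℂ) * ((-Real.sin (s * ω) * ω : ℝ) : ℂ)
          + Complex.I * (B : ℂ) * ((Real.cos (s * ω) * ω : ℝ) : ℂ)) s :=
      (hcos.const_mul _).add (hsin.const_mul _)
    have hdiv := hN.div hD hQ
    have hpyth : ((Real.sin (s * ω) : ℂ))^2 + ((Real.cos (s * ω) : ℂ))^2 = 1 := by
      have h := Real.sin_sq_add_cos_sq (s * ω)
      rw [← Complex.ofReal_pow, ← Complex.ofReal_pow, ← Complex.ofReal_add, h,
        Complex.ofReal_one]
    have hCDc : ((C : ℂ))^2 + ((D : ℂ))^2 = 1 := by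
      rw [← Complex.ofReal_pow, ← Complex.ofReal_pow, ← Complex.ofReal_add, hCD,
        Complex.ofReal_one]
    convert hdiv using 1
    · rfl
    · rfl
    simp only [pfun, ← hωdef, Complex.ofReal_mul, Complex.ofReal_neg]
    set si : ℂ := ((Real.sin (s * ω) : ℝ) : ℂ) with hsi
    set co : ℂ := ((Real.cos (s * ω) : ℝ) : ℂ) with hco
    set w : ℂ := ((ω : ℝ) : ℂ) with hw
    have key : ((C:ℂ)+Complex.I*D)*(((C:ℂ)-Complex.I*D)*si)^2
        - 2*Complex.I*B*(((C:ℂ)-Complex.I*D)*si)*(w*co+Complex.I*B*si)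
        + ((C:ℂ)-Complex.I*D)*(w*co+Complex.I*B*si)^2
      = ((C:ℂ)-Complex.I*D)*(co*w)*(w*co+Complex.I*B*si)
        - ((C:ℂ)-Complex.I*D)*si*(w*(-(si*w))+Complex.I*B*(co*w)) := by
      linear_combination (((C:ℂ)-Complex.I*D)*si^2) * (hCDc - hω2)
        - (((C:ℂ)-Complex.I*D)*si^2*((B:ℂ)^2+(D:ℂ)^2)) * Complex.I_sq
    rw [eq_div_iff (pow_ne_zero 2 hQ)]
    have hinv : (w * co + Complex.I * (B:ℂ) * si) * (w * co + Complex.I * (B:ℂ) * si)⁻¹ = 1 :=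
      mul_inv_cancel₀ hQ
    linear_combination key + (((C:ℂ)+Complex.I*D)*(((C:ℂ)-Complex.I*D)*si)^2
      * ((w * co + Complex.I * (B:ℂ) * si) * (w * co + Complex.I * (B:ℂ) * si)⁻¹ + 1)
      - 2*Complex.I*B*(((C:ℂ)-Complex.I*D)*si)*(w * co + Complex.I * (B:ℂ) * si)) * hinv
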